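/- Let ⟨x,y⟩₁ = −x₀y₀ + x₁y₁ + x₂y₂ + x₃y₃ + x₄y₄ denote the Lorentzian bilinear form on ℝ⁵, let a be a nonzero real number and b a real number with b/a − 1/(4a²) − 1 ≥ 0, and let Θ(t,u) = (a(t²+u²) + b, t, u, √(b/a − 1/(4a²) − 1), a(t²+u²) − 1/(2a) + b). Define ξ₁(t,u) = (0, 0, 0, 1, 0), ξ₂(t,u) = ((4a²(t²+u²) + 3)/(2√2), √2·a t, √2·a u, 0, (4a²(t²+u²) + 1)/(2√2)), and ξ₃(t,u) = ((1 − 4a²(t²+u²))/(2√2), −√2·a t, −√2·a u, 0, (3 − 4a²(t²+u²))/(2√2)). Then for all (t,u): ⟨ξ₁,ξ₁⟩₁ = 1, ⟨ξ₂,ξ₂⟩₁ = −1, ⟨ξ₃,ξ₃⟩₁ = 1; ⟨ξᵢ,ξⱼ⟩₁ = 0 for i ≠ j; ⟨ξᵢ, ∂ₜΘ⟩₁ = ⟨ξᵢ, ∂ᵤΘ⟩₁ = 0 for each i; and each partial derivative of each ξᵢ lies in the span of {∂ₜΘ, ∂ᵤΘ} (explicitly ∂ₜξ₁ = ∂ᵤξ₁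 = 0, ∂ₜξ₂ = √2·a·∂ₜΘ, ∂ᵤξ₂ = √2·a·∂ᵤΘ, ∂ₜξ₃ = −√2·a·∂ₜΘ, ∂ᵤξ₃ = −√2·a·∂ᵤΘ). -/

import Mathlib

/-- The Lorentzian bilinear form on `ℝ⁵` with timelike coordinate `x₀`. -/
def lor5 (x y : Fin 5 → ℝ) : ℝ :=
  -(x 0 * y 0) + x 1 * y 1 + x 2 * y 2 + x 3 * y 3 + x 4 * y 4

lemma hdv {n : ℕ} (V W C : Fin n → ℝ) (x : ℝ) :
    HasDerivAt (fun s : ℝ => s ^ 2 • V + s • W + C) ((2 * x) • V + W) x := by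
  rw [hasDerivAt_pi]
  intro i
  simp only [Pi.add_apply, Pi.smul_apply, smul_eq_mul]
  have h1 := (hasDerivAt_pow 2 x).mul_const (V i)
  have h2 := (hasDerivAt_id x).mul_const (W i)
  simpa [mul_comm, mul_assoc, pow_one] using (h1.add h2).add_const (C i)

set_option maxHeartbeats 1000000 in
/-- Case 4 of the proof of Theorem 4.8: `ξ₁, ξ₂, ξ₃` form a parallel
pseudo-orthonormal basis of the normal bundle in `ℝ⁵₁` of the flat integral
surface of case (4) of Proposition 4.3. -/
theorem stmt_12 (a b : ℝ) (ha : a ≠ 0)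
    (hb : b / a - 1 / (4 * a ^ 2) - 1 ≥ 0)
    (Θ ξ₁ ξ₂ ξ₃ : ℝ → ℝ → Fin 5 → ℝ)
    (hΘ : ∀ t u : ℝ, Θ t u =
      ![a * (t ^ 2 + u ^ 2) + b, t, u,
        Real.sqrt (b / a - 1 / (4 * a ^ 2) - 1),
        a * (t ^ 2 + u ^ 2) - 1 / (2 * a) + b])
    (hξ₁ : ∀ t u : ℝ, ξ₁ t u = ![0, 0, 0, 1, 0])
    (hξ₂ : ∀ t u : ℝ, ξ₂ t u =
      ![(4 * a ^ 2 * (t ^ 2 + u ^ 2) + 3) / (2 * Real.sqrt 2),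
        Real.sqrt 2 * a * t, Real.sqrt 2 * a * u, 0,
        (4 * a ^ 2 * (t ^ 2 + u ^ 2) + 1) / (2 * Real.sqrt 2)])
    (hξ₃ : ∀ t u : ℝ, ξ₃ t u =
      ![(1 - 4 * a ^ 2 * (t ^ 2 + u ^ 2)) / (2 * Real.sqrt 2),
        -(Real.sqrt 2 * a * t), -(Real.sqrt 2 * a * u), 0,
        (3 - 4 * a ^ 2 * (t ^ 2 + u ^ 2)) / (2 * Real.sqrt 2)]) :
    ∀ t u : ℝ,
      lor5 (ξ₁ t u) (ξ₁ t u) = 1 ∧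
      lor5 (ξ₂ t u) (ξ₂ t u) = -1 ∧
      lor5 (ξ₃ t u) (ξ₃ t u) = 1 ∧
      lor5 (ξ₁ t u) (ξ₂ t u) = 0 ∧
      lor5 (ξ₁ t u) (ξ₃ t u) = 0 ∧
      lor5 (ξ₂ t u) (ξ₃ t u) = 0 ∧
      lor5 (ξ₁ t u) (deriv (fun t' => Θ t' u) t) = 0 ∧
      lor5 (ξ₁ t u) (deriv (fun u' => Θ t u') u) = 0 ∧
      lor5 (ξ₂ t u) (deriv (fun t' => Θ t' u) t) = 0 ∧
      lor5 (ξ₂ t u) (deriv (fun u' => Θ t u') u) = 0 ∧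
      lor5 (ξ₃ t u) (deriv (fun t' => Θ t' u) t) = 0 ∧
      lor5 (ξ₃ t u) (deriv (fun u' => Θ t u') u) = 0 ∧
      deriv (fun t' => ξ₁ t' u) t = 0 ∧
      deriv (fun u' => ξ₁ t u') u = 0 ∧
      deriv (fun t' => ξ₂ t' u) t = (Real.sqrt 2 * a) • deriv (fun t' => Θ t' u) t ∧
      deriv (fun u' => ξ₂ t u') u = (Real.sqrt 2 * a) • deriv (fun u' => Θ t u') u ∧
      deriv (fun t' => ξ₃ t' u) t = (-(Real.sqrt 2 * a)) • deriv (fun t' => Θ t' u) t ∧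
      deriv (fun u' => ξ₃ t u') u = (-(Real.sqrt 2 * a)) • deriv (fun u' => Θ t u') u ∧
      deriv (fun t' => ξ₁ t' u) t ∈
        Submodule.span ℝ ({deriv (fun t' => Θ t' u) t, deriv (fun u' => Θ t u') u} : Set (Fin 5 → ℝ)) ∧
      deriv (fun u' => ξ₁ t u') u ∈
        Submodule.span ℝ ({deriv (fun t' => Θ t' u) t, deriv (fun u' => Θ t u') u} : Set (Fin 5 → ℝ)) ∧
      deriv (fun t' => ξ₂ t' u) t ∈
        Submodule.span ℝ ({deriv (fun t' => Θ t' u) t, deriv (fun u' => Θ t u') u} : Set (Fin 5 → ℝ)) ∧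
      deriv (fun u' => ξ₂ t u') u ∈
        Submodule.span ℝ ({deriv (fun t' => Θ t' u) t, deriv (fun u' => Θ t u') u} : Set (Fin 5 → ℝ)) ∧
      deriv (fun t' => ξ₃ t' u) t ∈
        Submodule.span ℝ ({deriv (fun t' => Θ t' u) t, deriv (fun u' => Θ t u') u} : Set (Fin 5 → ℝ)) ∧
      deriv (fun u' => ξ₃ t u') u ∈
        Submodule.span ℝ ({deriv (fun t' => Θ t' u) t, deriv (fun u' => Θ t u') u} : Set (Fin 5 → ℝ)) := by
  have s2 : Real.sqrt 2 * Real.sqrt 2 = 2 := Real.mul_self_sqrt (by norm_num)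
  have s2ne : Real.sqrt 2 ≠ 0 := by positivity
  intro t u
  -- Θ t-derivative
  have hΘt : HasDerivAt (fun t' => Θ t' u) ![2 * a * t, 1, 0, 0, 2 * a * t] t := by
    have he : (fun t' => Θ t' u) = fun s : ℝ =>
        s ^ 2 • (![a, 0, 0, 0, a] : Fin 5 → ℝ) + s • (![0, 1, 0, 0, 0] : Fin 5 → ℝ) +
        ![a * u ^ 2 + b, 0, u, Real.sqrt (b / a - 1 / (4 * a ^ 2) - 1),
          a * u ^ 2 - 1 / (2 * a) + b] := by
      funext s; rw [hΘ]; ext i; fin_cases i <;> simp <;> ring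
    rw [he]
    convert hdv _ _ _ t using 1
    ext i; fin_cases i <;> simp <;> ring
  have hΘu : HasDerivAt (fun u' => Θ t u') ![2 * a * u, 0, 1, 0, 2 * a * u] u := by
    have he : (fun u' => Θ t u') = fun s : ℝ =>
        s ^ 2 • (![a, 0, 0, 0, a] : Fin 5 → ℝ) + s • (![0, 0, 1, 0, 0] : Fin 5 → ℝ) +
        ![a * t ^ 2 + b, t, 0, Real.sqrt (b / a - 1 / (4 * a ^ 2) - 1),
          a * t ^ 2 - 1 / (2 * a) + b] := by
      funext s; rw [hΘ]; ext i; fin_cases i <;> simp <;> ring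
    rw [he]
    convert hdv _ _ _ u using 1
    ext i; fin_cases i <;> simp <;> ring
  have hξ₁t : HasDerivAt (fun t' => ξ₁ t' u) 0 t := by
    have he : (fun t' => ξ₁ t' u) = fun _ : ℝ => (![0, 0, 0, 1, 0] : Fin 5 → ℝ) := by
      funext s; rw [hξ₁]
    rw [he]; exact hasDerivAt_const _ _
  have hξ₁u : HasDerivAt (fun u' => ξ₁ t u') 0 u := by
    have he : (fun u' => ξ₁ t u') = fun _ : ℝ => (![0, 0, 0, 1, 0] : Fin 5 → ℝ) := by
      funext s; rw [hξ₁]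
    rw [he]; exact hasDerivAt_const _ _
  have hξ₂t : HasDerivAt (fun t' => ξ₂ t' u)
      ((Real.sqrt 2 * a) • ![2 * a * t, 1, 0, 0, 2 * a * t]) t := by
    have he : (fun t' => ξ₂ t' u) = fun s : ℝ =>
        s ^ 2 • (![4 * a ^ 2 / (2 * Real.sqrt 2), 0, 0, 0, 4 * a ^ 2 / (2 * Real.sqrt 2)] : Fin 5 → ℝ) +
        s • (![0, Real.sqrt 2 * a, 0, 0, 0] : Fin 5 → ℝ) +
        ![(4 * a ^ 2 * u ^ 2 + 3) / (2 * Real.sqrt 2), 0, Real.sqrt 2 * a * u, 0,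
          (4 * a ^ 2 * u ^ 2 + 1) / (2 * Real.sqrt 2)] := by
      funext s; rw [hξ₂]; ext i; fin_cases i <;> simp <;> ring
    rw [he]
    convert hdv _ _ _ t using 1
    ext i; fin_cases i <;> simp <;> field_simp <;> linear_combination (2 * t) * s2
  have hξ₂u : HasDerivAt (fun u' => ξ₂ t u')
      ((Real.sqrt 2 * a) • ![2 * a * u, 0, 1, 0, 2 * a * u]) u := by
    have he : (fun u' => ξ₂ t u') = fun s : ℝ =>
        s ^ 2 • (![4 * a ^ 2 / (2 * Real.sqrt 2), 0, 0, 0, 4 * a ^ 2 / (2 * Real.sqrt 2)] : Fin 5 → ℝ) +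
        s • (![0, 0, Real.sqrt 2 * a, 0, 0] : Fin 5 → ℝ) +
        ![(4 * a ^ 2 * t ^ 2 + 3) / (2 * Real.sqrt 2), Real.sqrt 2 * a * t, 0, 0,
          (4 * a ^ 2 * t ^ 2 + 1) / (2 * Real.sqrt 2)] := by
      funext s; rw [hξ₂]; ext i; fin_cases i <;> simp <;> ring
    rw [he]
    convert hdv _ _ _ u using 1
    ext i; fin_cases i <;> simp <;> field_simp <;> linear_combination (2 * u) * s2
  have hξ₃t : HasDerivAt (fun t' => ξ₃ t' u)
      ((-(Real.sqrt 2 * a)) • ![2 * a * t, 1, 0, 0, 2 * a * t]) t := by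
    have he : (fun t' => ξ₃ t' u) = fun s : ℝ =>
        s ^ 2 • (![-(4 * a ^ 2) / (2 * Real.sqrt 2), 0, 0, 0, -(4 * a ^ 2) / (2 * Real.sqrt 2)] : Fin 5 → ℝ) +
        s • (![0, -(Real.sqrt 2 * a), 0, 0, 0] : Fin 5 → ℝ) +
        ![(1 - 4 * a ^ 2 * u ^ 2) / (2 * Real.sqrt 2), 0, -(Real.sqrt 2 * a * u), 0,
          (3 - 4 * a ^ 2 * u ^ 2) / (2 * Real.sqrt 2)] := by
      funext s; rw [hξ₃]; ext i; fin_cases i <;> simp <;> ring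
    rw [he]
    convert hdv _ _ _ t using 1
    ext i; fin_cases i <;> simp <;> field_simp <;> linear_combination (-2 * t) * s2
  have hξ₃u : HasDerivAt (fun u' => ξ₃ t u')
      ((-(Real.sqrt 2 * a)) • ![2 * a * u, 0, 1, 0, 2 * a * u]) u := by
    have he : (fun u' => ξ₃ t u') = fun s : ℝ =>
        s ^ 2 • (![-(4 * a ^ 2) / (2 * Real.sqrt 2), 0, 0, 0, -(4 * a ^ 2) / (2 * Real.sqrt 2)] : Fin 5 → ℝ) +
        s • (![0, 0, -(Real.sqrt 2 * a), 0, 0] : Fin 5 → ℝ) +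
        ![(1 - 4 * a ^ 2 * t ^ 2) / (2 * Real.sqrt 2), -(Real.sqrt 2 * a * t), 0, 0,
          (3 - 4 * a ^ 2 * t ^ 2) / (2 * Real.sqrt 2)] := by
      funext s; rw [hξ₃]; ext i; fin_cases i <;> simp <;> ring
    rw [he]
    convert hdv _ _ _ u using 1
    ext i; fin_cases i <;> simp <;> field_simp <;> linear_combination (-2 * u) * s2
  have s2p : Real.sqrt 2 ^ 2 = 2 := Real.sq_sqrt (by norm_num)
  have s4 : Real.sqrt 2 ^ 4 = 4 := by
    have : Real.sqrt 2 ^ 4 = (Real.sqrt 2 ^ 2) ^ 2 := by ring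
    rw [this, s2p]; norm_num
  have dTt := hΘt.deriv
  have dTu := hΘu.deriv
  have e13 : deriv (fun t' => ξ₁ t' u) t = 0 := hξ₁t.deriv
  have e14 : deriv (fun u' => ξ₁ t u') u = 0 := hξ₁u.deriv
  have e15 : deriv (fun t' => ξ₂ t' u) t = (Real.sqrt 2 * a) • deriv (fun t' => Θ t' u) t := by
    rw [hξ₂t.deriv, dTt]
  have e16 : deriv (fun u' => ξ₂ t u') u = (Real.sqrt 2 * a) • deriv (fun u' => Θ t u') u := by
    rw [hξ₂u.deriv, dTu]
  have e17 : deriv (fun t' => ξ₃ t' u) t = (-(Real.sqrt 2 * a)) • deriv (fun t' => Θ t' u) t := by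
    rw [hξ₃t.deriv, dTt]
  have e18 : deriv (fun u' => ξ₃ t u') u = (-(Real.sqrt 2 * a)) • deriv (fun u' => Θ t u') u := by
    rw [hξ₃u.deriv, dTu]
  have memt : deriv (fun t' => Θ t' u) t ∈
      Submodule.span ℝ ({deriv (fun t' => Θ t' u) t, deriv (fun u' => Θ t u') u} : Set (Fin 5 → ℝ)) :=
    Submodule.subset_span (Set.mem_insert _ _)
  have memu : deriv (fun u' => Θ t u') u ∈
      Submodule.span ℝ ({deriv (fun t' => Θ t' u) t, deriv (fun u' => Θ t u') u} : Set (Fin 5 → ℝ)) :=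
    Submodule.subset_span (Set.mem_insert_iff.mpr (Or.inr rfl))
  refine ⟨?_, ?_, ?_, ?_, ?_, ?_, ?_, ?_, ?_, ?_, ?_, ?_, e13, e14, e15, e16, e17, e18,
    ?_, ?_, ?_, ?_, ?_, ?_⟩
  · rw [lor5, hξ₁]; simp
  · rw [lor5, hξ₂]; simp; field_simp; ring_nf; simp only [s2p, s4]; ring
  · rw [lor5, hξ₃]; simp; field_simp; ring_nf; simp only [s2p, s4]; ring
  · rw [lor5, hξ₁, hξ₂]; simp
  · rw [lor5, hξ₁, hξ₃]; simp
  · rw [lor5, hξ₂, hξ₃]; simp; field_simp; ring_nf; simp only [s2p, s4]; ring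
  · rw [dTt, lor5, hξ₁]; simp
  · rw [dTu, lor5, hξ₁]; simp
  · rw [dTt, lor5, hξ₂]; simp; field_simp; ring_nf; simp only [s2p, s4]; ring
  · rw [dTu, lor5, hξ₂]; simp; field_simp; ring_nf; simp only [s2p, s4]; ring
  · rw [dTt, lor5, hξ₃]; simp; field_simp; ring_nf; simp only [s2p, s4]; ring
  · rw [dTu, lor5, hξ₃]; simp; field_simp; ring_nf; simp only [s2p, s4]; ring
  · rw [e13]; exact Submodule.zero_mem _
  · rw [e14]; exact Submodule.zero_mem _
  · rw [e15]; exact Submodule.smul_mem _ _ memt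
  · rw [e16]; exact Submodule.smul_mem _ _ memu
  · rw [e17]; exact Submodule.smul_mem _ _ memt
  · rw [e18]; exact Submodule.smul_mem _ _ memu
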